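/- If P = (v_1, ..., v_p) is a TSP-violating path (i.e., there exists a path on the same node set from v_1 to v_p with strictly smaller total distance), then every TSP-optimal route (a route that is a shortest tour over its visited customers) fails to contain at least one arc of P. Equivalently, the number of arcs of P used by any TSP-optimal route is at most |A(P)| - 1 = p - 2. -/

import Mathlib

variable {V : Type*}

/-- The list of arcs (consecutive node pairs) of a node list. -/
def arcsOf (l : List V) : List (V × V) := l.zip l.tail

/-- The length of a path given as a node list: the sum of its arc distances. -/
def plen (d : V → V → ℝ) (l : List V) : ℝ :=
  ((arcsOf l).map (fun a => d a.1 a.2)).sum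

/-- A path is TSP-violating if some path on the same node set with
the same endpoints is strictly shorter. -/
def TSPviolating (d : V → V → ℝ) (P : List V) : Prop :=
  ∃ Q : List V, Q.Perm P ∧ Q.head? = P.head? ∧ Q.getLast? = P.getLast? ∧
    plen d Q < plen d P

/-- Length of the route visiting customers `c` in order,
starting and ending at the depot. -/
def routeLen (d : V → V → ℝ) (depot : V) (c : List V) : ℝ :=
  plen d (depot :: c ++ [depot])

/-- A route (given by its ordered customer list) is TSP-optimal:
no reordering of its customers gives a strictly shorter route. -/
def TSPopt (d : V → V → ℝ) (depot : V) (c : List V) : Prop :=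
  ∀ c' : List V, c'.Perm c → routeLen d depot c ≤ routeLen d depot c'

/-- Arc flow of a set of selected routes: the number of selected routes using arc `a`. -/
def flow [DecidableEq V] (depot : V) (routes : List (List V)) (a : V × V) : ℤ :=
  (routes.map (fun c => ((arcsOf (depot :: c ++ [depot])).count a : ℤ))).sum

lemma arcsOf_cons_cons (x y : V) (l : List V) :
    arcsOf (x :: y :: l) = (x, y) :: arcsOf (y :: l) := rfl

lemma plen_nil (d : V → V → ℝ) : plen d ([] : List V) = 0 := by simp [plen, arcsOf]

lemma plen_single (d : V → V → ℝ) (x : V) : plen d [x] = 0 := by simp [plen, arcsOf]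

lemma plen_cons_cons (d : V → V → ℝ) (x y : V) (l : List V) :
    plen d (x :: y :: l) = d x y + plen d (y :: l) := by
  simp [plen, arcsOf_cons_cons]

lemma plen_append (d : V → V → ℝ) (X Y : List V) (hX : X ≠ []) (hY : Y ≠ []) :
    plen d (X ++ Y) = plen d X + d (X.getLast hX) (Y.head hY) + plen d Y := by
  induction X with
  | nil => exact absurd rfl hX
  | cons x xs ih =>
    cases xs with
    | nil =>
      cases Y with
      | nil => exact absurd rfl hY
      | cons y ys => simp [plen_cons_cons, plen_single]
    | cons x2 xs2 =>
      have h := ih (by simp)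
      simp only [List.cons_append] at h ⊢
      rw [plen_cons_cons, plen_cons_cons, h,
        show (x :: x2 :: xs2).getLast hX = (x2 :: xs2).getLast (by simp) from
          List.getLast_cons (by simp)]
      ring

lemma mem_arcsOf (a b : V) : ∀ (l : List V), ((a, b) ∈ arcsOf l ↔ ∃ s t, s ++ a :: b :: t = l)
  | [] => by
      constructor
      · simp [arcsOf]
      · rintro ⟨s, t, h⟩; exact absurd h (by simp)
  | [x] => by
      constructor
      · simp [arcsOf]
      · rintro ⟨s, t, h⟩
        apply_fun List.length at h
        simp at h; omega
  | x :: y :: r => by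
      rw [arcsOf_cons_cons, List.mem_cons]
      constructor
      · rintro (h | h)
        · rw [Prod.mk.injEq] at h
          exact ⟨[], r, by simp [h.1, h.2]⟩
        · obtain ⟨s, t, hst⟩ := (mem_arcsOf a b (y :: r)).mp h
          exact ⟨x :: s, t, by rw [List.cons_append, hst]⟩
      · rintro ⟨s, t, hst⟩
        cases s with
        | nil =>
          left
          injection hst with h1 h2
          injection h2 with h2 _
          simp [h1, h2]
        | cons s0 s' =>
          right
          injection hst with h1 h2
          exact (mem_arcsOf a b (y :: r)).mpr ⟨s', t, h2⟩

lemma nodup_split_unique [DecidableEq V] {v : V} {s1 t1 s2 t2 : List V}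
    (h : (s1 ++ v :: t1).Nodup) (he : s1 ++ v :: t1 = s2 ++ v :: t2) :
    s1 = s2 ∧ t1 = t2 := by
  have hv1 : v ∉ s1 := fun hm =>
    (List.disjoint_of_nodup_append h) hm (List.mem_cons_self)
  have hv2 : v ∉ s2 := by
    rw [he] at h
    exact fun hm => (List.disjoint_of_nodup_append h) hm (List.mem_cons_self)
  have h1 : List.idxOf v (s1 ++ v :: t1) = s1.length := by
    rw [List.idxOf_append_of_notMem hv1, List.idxOf_cons_self, Nat.add_zero]
  have h2 : List.idxOf v (s2 ++ v :: t2) = s2.length := by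
    rw [List.idxOf_append_of_notMem hv2, List.idxOf_cons_self, Nat.add_zero]
  have hlen : s1.length = s2.length := by rw [← h1, ← h2, he]
  obtain ⟨hs, ht⟩ := List.append_inj he hlen
  injection ht with _ ht
  exact ⟨hs, ht⟩

lemma chain_infix [DecidableEq V] (depot : V) (m : List V) (hmnd : m.Nodup) :
    ∀ P : List V, 2 ≤ P.length → depot ∉ (P.drop 1).dropLast →
      (∀ a ∈ arcsOf P, a ∈ arcsOf (depot :: m)) → P <:+: (depot :: m) := by
  intro P
  induction P with
  | nil => intro h; simp at h
  | cons v1 rest ih =>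
    intro hlen hdep harcs
    match rest, hlen with
    | [v2], _ =>
      have h := harcs (v1, v2) (by simp [arcsOf])
      obtain ⟨s, t, hst⟩ := (mem_arcsOf v1 v2 _).mp h
      exact ⟨s, t, by simpa using hst⟩
    | v2 :: v3 :: rs, _ =>
      have hdep' : depot ∉ ((v2 :: v3 :: rs).drop 1).dropLast := by
        simp only [List.drop_one, List.tail] at hdep ⊢
        intro hmem
        exact hdep (by rw [List.dropLast_cons₂]; exact List.mem_cons_of_mem _ hmem)
      have hrest : (v2 :: v3 :: rs) <:+: (depot :: m) := by
        apply ih (by simp) hdep'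
        intro a ha
        exact harcs a (by rw [arcsOf_cons_cons]; exact List.mem_cons_of_mem _ ha)
      obtain ⟨s, t, hst⟩ := hrest
      have harc := (mem_arcsOf v1 v2 _).mp
        (harcs (v1, v2) (by rw [arcsOf_cons_cons]; exact List.mem_cons_self))
      obtain ⟨u, w, huw⟩ := harc
      have hv2dep : v2 ≠ depot := by
        intro h
        apply hdep
        simp only [List.drop_one, List.tail]
        rw [List.dropLast_cons₂, ← h]
        exact List.mem_cons_self
      cases s with
      | nil =>
        simp only [List.nil_append] at hst
        injection hst with h1 _
        exact absurd h1 hv2dep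
      | cons s0 s' =>
        simp only [List.cons_append, List.append_assoc, List.cons_append] at hst
        injection hst with hs0 hm1
        -- hm1 : s' ++ v2 :: (v3 :: rs ++ t) = m
        cases u with
        | nil =>
          simp only [List.nil_append] at huw
          injection huw with hv1 hm2
          -- hm2 : v2 :: w = m, hv1 : v1 = depot
          have := nodup_split_unique (v := v2) (s1 := s') (t1 := (v3 :: rs) ++ t)
            (s2 := []) (t2 := w) (by rw [show s' ++ v2 :: ((v3 :: rs) ++ t) = m by simpa using hm1]; exact hmnd)
            (by rw [show s' ++ v2 :: ((v3 :: rs) ++ t) = m by simpa using hm1]; simpa using hm2.symm)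
          obtain ⟨hs', hw⟩ := this
          refine ⟨[], t, ?_⟩
          simp only [List.nil_append, List.cons_append]
          rw [hv1]
          congr 1
          rw [← hm2, ← hw]
          simp
        | cons u0 u' =>
          simp only [List.cons_append] at huw
          injection huw with hu0 hm2
          -- hm2 : u' ++ v1 :: v2 :: w = m
          have hm2' : (u' ++ [v1]) ++ v2 :: w = m := by simpa using hm2
          have := nodup_split_unique (v := v2) (s1 := s') (t1 := (v3 :: rs) ++ t)
            (s2 := u' ++ [v1]) (t2 := w)
            (by rw [show s' ++ v2 :: ((v3 :: rs) ++ t) = m by simpa using hm1]; exact hmnd)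
            (by rw [show s' ++ v2 :: ((v3 :: rs) ++ t) = m by simpa using hm1]; exact hm2'.symm)
          obtain ⟨hs', _⟩ := this
          refine ⟨depot :: u', t, ?_⟩
          simp only [List.cons_append]
          congr 1
          rw [show u' ++ (v1 :: v2 :: v3 :: rs) ++ t = (u' ++ [v1]) ++ v2 :: ((v3 :: rs) ++ t) by simp, ← hs']
          simpa using hm1

lemma head_eq_of_head? {P Q : List V} (hP : P ≠ []) (hQ : Q ≠ [])
    (h : Q.head? = P.head?) : Q.head hQ = P.head hP := by
  rw [List.head?_eq_head hQ, List.head?_eq_head hP] at h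
  exact Option.some.inj h

lemma getLast_eq_of_getLast? {P Q : List V} (hP : P ≠ []) (hQ : Q ≠ [])
    (h : Q.getLast? = P.getLast?) : Q.getLast hQ = P.getLast hP := by
  rw [List.getLast?_eq_getLast hQ, List.getLast?_eq_getLast hP] at h
  exact Option.some.inj h

lemma plen_sandwich (d : V → V → ℝ) (pre suf P Q : List V)
    (hP : P ≠ []) (hQ : Q ≠ [])
    (hh : Q.head? = P.head?) (hl : Q.getLast? = P.getLast?) :
    plen d (pre ++ Q ++ suf) + plen d P = plen d (pre ++ P ++ suf) + plen d Q := by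
  have hhd := head_eq_of_head? hP hQ hh
  have hlst := getLast_eq_of_getLast? hP hQ hl
  cases hpre : pre with
  | nil =>
    cases hsuf : suf with
    | nil => simp [add_comm]
    | cons s0 s' =>
      simp only [List.nil_append]
      rw [plen_append d Q (s0 :: s') hQ (by simp), plen_append d P (s0 :: s') hP (by simp), hlst]
      ring
  | cons p0 p' =>
    cases hsuf : suf with
    | nil =>
      simp only [List.append_nil]
      rw [plen_append d (p0 :: p') Q (by simp) hQ, plen_append d (p0 :: p') P (by simp) hP, hhd]
      ring
    | cons s0 s' =>
      rw [List.append_assoc, List.append_assoc,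
          plen_append d (p0 :: p') (Q ++ s0 :: s') (by simp) (by simp [hQ]),
          plen_append d (p0 :: p') (P ++ s0 :: s') (by simp) (by simp [hP]),
          plen_append d Q (s0 :: s') hQ (by simp),
          plen_append d P (s0 :: s') hP (by simp),
          List.head_append_of_ne_nil, List.head_append_of_ne_nil, hhd, hlst]
      ring
      · exact hP
      · exact hQ

lemma two_ends {depot : V} {M : List V} (h2 : 2 ≤ M.length)
    (hh : M.head? = some depot) (hl : M.getLast? = some depot) :
    ∃ c', M = depot :: c' ++ [depot] := by
  match M, h2 with
  | x :: y :: r, _ =>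
    refine ⟨(y :: r).dropLast, ?_⟩
    have hx : x = depot := by simpa using hh
    have hlast : (y :: r).getLast (by simp) = depot := by
      have h' := hl
      rw [List.getLast?_eq_getLast (by simp)] at h'
      have : (x :: y :: r).getLast (by simp) = depot := Option.some.inj h'
      rwa [List.getLast_cons (by simp)] at this
    have := List.dropLast_append_getLast (l := y :: r) (by simp)
    rw [hlast] at this
    rw [hx]
    simp only [List.cons_append]
    rw [this]


/-- if `P` is a TSP-violating path (distinct nodes, no depot as an
intermediate node), then any TSP-optimal route contains at most `|A(P)| - 1 = p - 2`
of the arcs of `P`. -/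
theorem tsp_optimal_route_misses_an_arc [DecidableEq V]
    (d : V → V → ℝ) (depot : V) (P : List V)
    (hPnd : P.Nodup) (hPdep : depot ∉ (P.drop 1).dropLast)
    (hviol : TSPviolating d P)
    (c : List V) (hc : c.Nodup) (hcdep : depot ∉ c)
    (hopt : TSPopt d depot c) :
    (((arcsOf P).filter
        (fun a => a ∈ arcsOf (depot :: c ++ [depot]))).length : ℤ)
      ≤ (P.length : ℤ) - 2 := by
  obtain ⟨Q, hQP, hQh, hQl, hQlt⟩ := hviol
  by_cases h2 : 2 ≤ P.length
  · by_cases hall : ∀ a ∈ arcsOf P, a ∈ arcsOf (depot :: c ++ [depot])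
    · exfalso
      have hmnd : (c ++ [depot]).Nodup := by
        refine List.Nodup.append hc (by simp) ?_
        intro x hx hx'
        simp at hx'
        subst hx'
        exact hcdep hx
      have hinf : P <:+: (depot :: (c ++ [depot])) :=
        chain_infix depot (c ++ [depot]) hmnd P h2 hPdep hall
      obtain ⟨pre, suf, hL⟩ := hinf
      have hPne : P ≠ [] := by intro h; rw [h] at h2; simp at h2
      have hQne : Q ≠ [] := by
        intro h
        rw [h] at hQP
        exact hPne hQP.symm.eq_nil
      have hlen : plen d (pre ++ Q ++ suf) + plen d P = plen d (pre ++ P ++ suf) + plen d Q :=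
        plen_sandwich d pre suf P Q hPne hQne hQh hQl
      have hL' : plen d (pre ++ Q ++ suf) < plen d (pre ++ P ++ suf) := by linarith
      have hhead : (pre ++ Q ++ suf).head? = some depot := by
        have h1 : (pre ++ P ++ suf).head? = some depot := by rw [hL]; rfl
        cases pre with
        | nil =>
          simp only [List.nil_append] at h1 ⊢
          rw [List.head?_append_of_ne_nil Q hQne, hQh,
            ← List.head?_append_of_ne_nil P hPne (l₂ := suf), h1]
        | cons p0 p' => simpa using (by simpa using h1 : p0 = depot)
      have hlast : (pre ++ Q ++ suf).getLast? = some depot := by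
        have h1 : (pre ++ P ++ suf).getLast? = some depot := by
          rw [hL, show depot :: (c ++ [depot]) = (depot :: c) ++ [depot] from (List.cons_append ..).symm,
            List.getLast?_append_of_ne_nil _ (by simp)]
          rfl
        cases suf with
        | nil =>
          simp only [List.append_nil] at h1 ⊢
          rw [List.getLast?_append_of_ne_nil (l₁ := pre) hQne, hQl,
            ← List.getLast?_append_of_ne_nil (l₁ := pre) hPne, h1]
        | cons s0 s' =>
          rw [List.getLast?_append_of_ne_nil (l₁ := pre ++ Q) (by simp)]
          rw [List.getLast?_append_of_ne_nil (l₁ := pre ++ P) (by simp)] at h1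
          exact h1
      have hlen2 : 2 ≤ (pre ++ Q ++ suf).length := by
        have hQPl := hQP.length_eq
        have : (pre ++ P ++ suf).length = (depot :: (c ++ [depot])).length := by rw [hL]
        simp at this ⊢
        omega
      obtain ⟨c', hc'⟩ := two_ends hlen2 hhead hlast
      have hperm : c'.Perm c := by
        have hp : (depot :: (c' ++ [depot])).Perm (depot :: (c ++ [depot])) := by
          rw [show (depot :: (c' ++ [depot])) = depot :: c' ++ [depot] from List.cons_append .., ← hc', ← hL]
          simpa [List.append_assoc] using (hQP.append_right suf).append_left pre
        exact (List.perm_append_right_iff [depot]).mp hp.cons_inv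
      have hfin := hopt c' hperm
      have e1 : routeLen d depot c' = plen d (pre ++ Q ++ suf) := by
        rw [routeLen, ← hc']
      have e2 : routeLen d depot c = plen d (pre ++ P ++ suf) := by
        rw [routeLen, List.cons_append, hL]
      rw [e1, e2] at hfin
      linarith
    · push_neg at hall
      obtain ⟨a, ha, hna⟩ := hall
      have hlt : ((arcsOf P).filter
          (fun a => a ∈ arcsOf (depot :: c ++ [depot]))).length < (arcsOf P).length :=
        List.length_filter_lt_length_iff_exists.mpr ⟨a, ha, by simpa using hna⟩
      have hal : (arcsOf P).length = P.length - 1 := by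
        simp only [arcsOf, List.length_zip, List.length_tail]
        omega
      omega
  · exfalso
    have hQeq : Q = P := by
      match P, h2 with
      | [], _ => exact hQP.eq_nil
      | [v], _ => exact List.perm_singleton.mp hQP
      | a :: b :: r, h2 => exact absurd (by simp) h2
    rw [hQeq] at hQlt
    exact lt_irrefl _ hQlt
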